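/- For each n ≥ 0, applying the operator A₅ = 2x + t·d/dx n times to the constant function 1 yields the heat polynomial evaluated at (2x,t): A₅ⁿ·1 = vₙ(2x,t), where vₙ(x,t) = Σ_{k=0}^{⌊n/2⌋} n!/((n-2k)!·k!) · x^{n-2k} t^k. -/

import Mathlib

open Nat in
/-- The heat polynomial `vₙ(x,t) = Σ_{k=0}^{⌊n/2⌋} n!/((n-2k)!·k!)·x^{n-2k}·t^k`. -/
noncomputable def heatPoly (n : ℕ) (x t : ℝ) : ℝ :=
  ∑ k ∈ Finset.range (n/2 + 1),
    (n ! : ℝ) / (((n - 2*k)! : ℝ) * (k ! : ℝ)) * x^(n - 2*k) * t^k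

/-- The operator `A₅ = 2x + t·d/dx` acting on functions of `x`. -/
noncomputable def A5 (t : ℝ) (f : ℝ → ℝ) : ℝ → ℝ := fun x => 2*x*f x + t * deriv f x

open Nat Finset in
lemma coeff_aux (n k : ℕ) (h : 2*k + 2 ≤ n) (y t : ℝ) :
    ((n+1)! : ℝ) / (((n+1 - 2*(k+1))! : ℝ) * (((k+1))! : ℝ)) * y^(n+1-2*(k+1)) * t^(k+1)
    = y * ((n ! : ℝ) / (((n - 2*(k+1))! : ℝ) * (((k+1))! : ℝ)) * y^(n-2*(k+1)) * t^(k+1))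
    + t * ((n ! : ℝ) / (((n - 2*k)! : ℝ) * ((k)! : ℝ)) * (((n - 2*k : ℕ) : ℝ) * y^(n-2*k-1) * 2) * t^k) := by
  obtain ⟨a, rfl⟩ : ∃ a, n = 2*k+2+a := ⟨n - (2*k+2), by omega⟩
  have e1 : 2*k+2+a+1-2*(k+1) = a+1 := by omega
  have e2 : 2*k+2+a-2*(k+1) = a := by omega
  have e3 : 2*k+2+a-2*k = a+2 := by omega
  have e4 : 2*k+2+a-2*k-1 = a+1 := by omega
  rw [e1, e2, e4, e3]
  have f1 : (((a+1)! : ℕ) : ℝ) = ((a:ℝ)+1) * ((a ! : ℕ) : ℝ) := by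
    push_cast [Nat.factorial_succ]; ring
  have f2 : (((a+2)! : ℕ) : ℝ) = ((a:ℝ)+2) * (((a:ℝ)+1) * ((a ! : ℕ) : ℝ)) := by
    rw [show a+2 = a+1+1 from rfl]
    push_cast [Nat.factorial_succ]; ring
  have f3 : (((k+1)! : ℕ) : ℝ) = ((k:ℝ)+1) * ((k ! : ℕ) : ℝ) := by
    push_cast [Nat.factorial_succ]; ring
  have f4 : (((2*k+2+a+1)! : ℕ) : ℝ) = (2*(k:ℝ)+2+(a:ℝ)+1) * (((2*k+2+a)! : ℕ) : ℝ) := by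
    push_cast [Nat.factorial_succ]; ring
  rw [f4, f2, f3, f1]
  have h1 : ((a)! : ℝ) ≠ 0 := Nat.cast_ne_zero.mpr (Nat.factorial_ne_zero a)
  have h2 : ((k)! : ℝ) ≠ 0 := Nat.cast_ne_zero.mpr (Nat.factorial_ne_zero k)
  have h3 : (a:ℝ)+1 ≠ 0 := by positivity
  have h4 : (a:ℝ)+2 ≠ 0 := by positivity
  have h5 : (k:ℝ)+1 ≠ 0 := by positivity
  field_simp
  push_cast
  ring

open Nat Finset in
lemma heat_rec (n : ℕ) (y t : ℝ) :
    heatPoly (n+1) y t =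
      y * heatPoly n y t +
      t * ∑ k ∈ Finset.range (n/2 + 1),
        (n ! : ℝ) / (((n - 2*k)! : ℝ) * ((k)! : ℝ)) * (((n - 2*k : ℕ) : ℝ) * y^(n - 2*k - 1) * 2) * t^k := by
  simp only [heatPoly, Finset.mul_sum]
  rcases Nat.even_or_odd n with ⟨m, rfl⟩ | ⟨m, rfl⟩
  · -- n = m + m
    rw [← two_mul m]
    have r1 : (2*m+1)/2 = m := by omega
    have r2 : (2*m)/2 = m := by omega
    rw [r1, r2, Finset.sum_range_succ' _ m, Finset.sum_range_succ'
      (fun k => y * ((((2*m)!) : ℝ) / ((((2*m - 2*k)!) : ℝ) * (((k)!) : ℝ)) * y^(2*m-2*k) * t^k)) m,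
      Finset.sum_range_succ (fun k => t * ((((2*m)!) : ℝ) / ((((2*m - 2*k)!) : ℝ) * (((k)!) : ℝ)) * (((2*m - 2*k : ℕ) : ℝ) * y^(2*m-2*k-1) * 2) * t^k)) m]
    have htop : t * ((((2*m)!) : ℝ) / ((((2*m - 2*m)!) : ℝ) * (((m)!) : ℝ)) * (((2*m - 2*m : ℕ) : ℝ) * y^(2*m-2*m-1) * 2) * t^m) = 0 := by
      simp
    have hzero : ((2*m+1)! : ℝ) / ((((2*m+1 - 2*0)!) : ℝ) * (((0)!) : ℝ)) * y^(2*m+1-2*0) * t^0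
        = y * ((((2*m)!) : ℝ) / ((((2*m - 2*0)!) : ℝ) * (((0)!) : ℝ)) * y^(2*m-2*0) * t^0) := by
      simp [Nat.factorial_ne_zero, pow_succ, div_self]
      ring
    rw [htop, hzero]
    have hterm : ∀ k ∈ Finset.range m,
        ((2*m+1)! : ℝ) / ((((2*m+1 - 2*(k+1))!) : ℝ) * ((((k+1))!) : ℝ)) * y^(2*m+1-2*(k+1)) * t^(k+1)
        = y * ((((2*m)!) : ℝ) / ((((2*m - 2*(k+1))!) : ℝ) * ((((k+1))!) : ℝ)) * y^(2*m-2*(k+1)) * t^(k+1))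
        + t * ((((2*m)!) : ℝ) / ((((2*m - 2*k)!) : ℝ) * (((k)!) : ℝ)) * (((2*m - 2*k : ℕ) : ℝ) * y^(2*m-2*k-1) * 2) * t^k) := by
      intro k hk
      have hk' : 2*k + 2 ≤ 2*m := by simp at hk; omega
      exact coeff_aux (2*m) k hk' y t
    rw [Finset.sum_congr rfl hterm, Finset.sum_add_distrib]
    ring
  · -- n = 2*m + 1
    have r1 : (2*m+1+1)/2 = m+1 := by omega
    have r2 : (2*m+1)/2 = m := by omega
    rw [r1, r2, Finset.sum_range_succ' _ (m+1), Finset.sum_range_succ _ m,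
      Finset.sum_range_succ'
      (fun k => y * ((((2*m+1)!) : ℝ) / ((((2*m+1 - 2*k)!) : ℝ) * (((k)!) : ℝ)) * y^(2*m+1-2*k) * t^k)) m,
      Finset.sum_range_succ (fun k => t * ((((2*m+1)!) : ℝ) / ((((2*m+1 - 2*k)!) : ℝ) * (((k)!) : ℝ)) * (((2*m+1 - 2*k : ℕ) : ℝ) * y^(2*m+1-2*k-1) * 2) * t^k)) m]
    have hzero : ((2*m+1+1)! : ℝ) / ((((2*m+1+1 - 2*0)!) : ℝ) * (((0)!) : ℝ)) * y^(2*m+1+1-2*0) * t^0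
        = y * ((((2*m+1)!) : ℝ) / ((((2*m+1 - 2*0)!) : ℝ) * (((0)!) : ℝ)) * y^(2*m+1-2*0) * t^0) := by
      simp [Nat.factorial_ne_zero, pow_succ, div_self]
      ring
    have htop : ((2*m+1+1)! : ℝ) / ((((2*m+1+1 - 2*(m+1))!) : ℝ) * ((((m+1))!) : ℝ)) * y^(2*m+1+1-2*(m+1)) * t^(m+1)
        = t * ((((2*m+1)!) : ℝ) / ((((2*m+1 - 2*m)!) : ℝ) * (((m)!) : ℝ)) * (((2*m+1 - 2*m : ℕ) : ℝ) * y^(2*m+1-2*m-1) * 2) * t^m) := by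
      have e1 : 2*m+1+1-2*(m+1) = 0 := by omega
      have e2 : 2*m+1-2*m = 1 := by omega
      have e3 : 2*m+1-2*m-1 = 0 := by omega
      rw [e1, e3, e2, Nat.factorial_succ (2*m+1), Nat.factorial_succ m]
      have h1 : (((m)!) : ℝ) ≠ 0 := Nat.cast_ne_zero.mpr (Nat.factorial_ne_zero m)
      have h2 : (((2*m+1)!) : ℝ) ≠ 0 := Nat.cast_ne_zero.mpr (Nat.factorial_ne_zero _)
      have h3 : (m:ℝ)+1 ≠ 0 := by positivity
      simp only [Nat.factorial_zero, Nat.factorial_one, Nat.cast_one, pow_zero]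
      push_cast
      field_simp
      ring
    have hterm : ∀ k ∈ Finset.range m,
        ((2*m+1+1)! : ℝ) / ((((2*m+1+1 - 2*(k+1))!) : ℝ) * ((((k+1))!) : ℝ)) * y^(2*m+1+1-2*(k+1)) * t^(k+1)
        = y * ((((2*m+1)!) : ℝ) / ((((2*m+1 - 2*(k+1))!) : ℝ) * ((((k+1))!) : ℝ)) * y^(2*m+1-2*(k+1)) * t^(k+1))
        + t * ((((2*m+1)!) : ℝ) / ((((2*m+1 - 2*k)!) : ℝ) * (((k)!) : ℝ)) * (((2*m+1 - 2*k : ℕ) : ℝ) * y^(2*m+1-2*k-1) * 2) * t^k) := by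
      intro k hk
      have hk' : 2*k + 2 ≤ 2*m+1 := by simp at hk; omega
      exact coeff_aux (2*m+1) k hk' y t
    rw [htop, hzero, Finset.sum_congr rfl hterm, Finset.sum_add_distrib]
    ring

open Nat Finset in
lemma heat_hasDeriv (n : ℕ) (t x : ℝ) :
    HasDerivAt (fun x => heatPoly n (2*x) t)
      (∑ k ∈ Finset.range (n/2 + 1),
        (n ! : ℝ) / (((n - 2*k)! : ℝ) * ((k)! : ℝ)) * (((n - 2*k : ℕ) : ℝ) * (2*x)^(n - 2*k - 1) * 2) * t^k) x := by
  simp only [heatPoly]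
  apply HasDerivAt.fun_sum
  intro k hk
  have h2x : HasDerivAt (fun x : ℝ => 2*x) 2 x := by
    simpa using (hasDerivAt_id x).const_mul 2
  exact ((h2x.pow (n - 2*k)).const_mul ((n ! : ℝ) / (((n - 2*k)! : ℝ) * ((k)! : ℝ)))).mul_const (t^k)

/-- `A₅ⁿ · 1 = vₙ(2x, t)`. -/
theorem stmt14 (n : ℕ) (t x : ℝ) :
    (A5 t)^[n] (fun _ => 1) x = heatPoly n (2*x) t := by
  induction n generalizing x with
  | zero => simp [heatPoly]
  | succ n ih =>
    rw [Function.iterate_succ_apply']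
    have hfn : (A5 t)^[n] (fun _ => 1) = fun x => heatPoly n (2*x) t := funext ih
    rw [hfn]
    show 2*x * heatPoly n (2*x) t + t * deriv (fun x => heatPoly n (2*x) t) x = _
    rw [(heat_hasDeriv n t x).deriv, heat_rec n (2*x) t]
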